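/- One has f(1/32) = 19/33177600, f(3/32) = 25219/33177600, f(5/32) = 334781/33177600, f(7/32) = 1396781/33177600, f(9/32) = 3470381/33177600, f(11/32) = 6555581/33177600, f(13/32) = 10393219/33177600, f(15/32) = 14515219/33177600, f(17/32) = 18662381/33177600, f(19/32) = 22784381/33177600, f(21/32) = 26622019/33177600, f(23/32) = 29707219/33177600, f(25/32) = 31780819/33177600, f(27/32) = 32842819/33177600, f(29/32) = 33152381/33177600, and f(31/32) = 33177581/33177600. -/

import Mathlib

open scoped BigOperators
open intervalIntegral Set

private lemma fab_polyint (c0 c1 c2 c3 c4 a b : ℝ) :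
    ∫ t in a..b, (c0 + c1*t + c2*t^2 + c3*t^3 + c4*t^4)
      = (c0*b + c1/2*b^2 + c2/3*b^3 + c3/4*b^4 + c4/5*b^5)
        - (c0*a + c1/2*a^2 + c2/3*a^3 + c3/4*a^4 + c4/5*a^5) := by
  have main : ∀ u : ℝ, HasDerivAt (fun x : ℝ => c0*x + c1/2*x^2 + c2/3*x^3 + c3/4*x^4 + c4/5*x^5)
      (c0 + c1*u + c2*u^2 + c3*u^3 + c4*u^4) u := by
    intro u
    have h := (((((hasDerivAt_id u).const_mul c0).add ((hasDerivAt_pow 2 u).const_mul (c1/2))).add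
      ((hasDerivAt_pow 3 u).const_mul (c2/3))).add ((hasDerivAt_pow 4 u).const_mul (c3/4))).add
      ((hasDerivAt_pow 5 u).const_mul (c4/5))
    refine h.congr_deriv ?_
    push_cast
    ring
  exact intervalIntegral.integral_eq_sub_of_hasDerivAt (fun t _ => main t)
    ((by fun_prop : Continuous fun t : ℝ => (c0 + c1*t + c2*t^2 + c3*t^3 + c4*t^4)).intervalIntegrable _ _)

private lemma fab_moment (g : ℝ → ℝ) (hc : Continuous g)
    (hd : ∀ x : ℝ, HasDerivAt g (2 * g (2 * x)) x)
    (c0 c1 c2 c3 c4 a b : ℝ) :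
    ∫ t in a..b, (c0 + c1*t + c2*t^2 + c3*t^3 + c4*t^4) * g t
      = ((c0 + c1*b + c2*b^2 + c3*b^3 + c4*b^4) * g (b/2)
         - (c1 + 2*c2*b + 3*c3*b^2 + 4*c4*b^3) * (2 * g (b/4))
         + (2*c2 + 6*c3*b + 12*c4*b^2) * (8 * g (b/8))
         - (6*c3 + 24*c4*b) * (64 * g (b/16))
         + (24*c4) * (1024 * g (b/32)))
      - ((c0 + c1*a + c2*a^2 + c3*a^3 + c4*a^4) * g (a/2)
         - (c1 + 2*c2*a + 3*c3*a^2 + 4*c4*a^3) * (2 * g (a/4))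
         + (2*c2 + 6*c3*a + 12*c4*a^2) * (8 * g (a/8))
         - (6*c3 + 24*c4*a) * (64 * g (a/16))
         + (24*c4) * (1024 * g (a/32))) := by
  have h1 : ∀ t : ℝ, HasDerivAt (fun x : ℝ => g (x/2)) (g t) t := by
    intro t
    have h' : HasDerivAt (fun x : ℝ => g (x/2)) (2 * g (2*(t/2)) * (1/2)) t :=
      (hd (t/2)).comp t ((hasDerivAt_id t).div_const 2)
    have e : (2:ℝ) * g (2*(t/2)) * (1/2) = g t := by rw [show (2:ℝ)*(t/2) = t by ring]; ring
    rwa [e] at h'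
  have h2 : ∀ t : ℝ, HasDerivAt (fun x : ℝ => g (x/4)) ((1/2) * g (t/2)) t := by
    intro t
    have h' : HasDerivAt (fun x : ℝ => g (x/4)) (2 * g (2*(t/4)) * (1/4)) t :=
      (hd (t/4)).comp t ((hasDerivAt_id t).div_const 4)
    have e : (2:ℝ) * g (2*(t/4)) * (1/4) = (1/2) * g (t/2) := by
      rw [show (2:ℝ)*(t/4) = t/2 by ring]; ring
    rwa [e] at h'
  have h3 : ∀ t : ℝ, HasDerivAt (fun x : ℝ => g (x/8)) ((1/4) * g (t/4)) t := by
    intro t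
    have h' : HasDerivAt (fun x : ℝ => g (x/8)) (2 * g (2*(t/8)) * (1/8)) t :=
      (hd (t/8)).comp t ((hasDerivAt_id t).div_const 8)
    have e : (2:ℝ) * g (2*(t/8)) * (1/8) = (1/4) * g (t/4) := by
      rw [show (2:ℝ)*(t/8) = t/4 by ring]; ring
    rwa [e] at h'
  have h4 : ∀ t : ℝ, HasDerivAt (fun x : ℝ => g (x/16)) ((1/8) * g (t/8)) t := by
    intro t
    have h' : HasDerivAt (fun x : ℝ => g (x/16)) (2 * g (2*(t/16)) * (1/16)) t :=
      (hd (t/16)).comp t ((hasDerivAt_id t).div_const 16)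
    have e : (2:ℝ) * g (2*(t/16)) * (1/16) = (1/8) * g (t/8) := by
      rw [show (2:ℝ)*(t/16) = t/8 by ring]; ring
    rwa [e] at h'
  have h5 : ∀ t : ℝ, HasDerivAt (fun x : ℝ => g (x/32)) ((1/16) * g (t/16)) t := by
    intro t
    have h' : HasDerivAt (fun x : ℝ => g (x/32)) (2 * g (2*(t/32)) * (1/32)) t :=
      (hd (t/32)).comp t ((hasDerivAt_id t).div_const 32)
    have e : (2:ℝ) * g (2*(t/32)) * (1/32) = (1/16) * g (t/16) := by
      rw [show (2:ℝ)*(t/32) = t/16 by ring]; ring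
    rwa [e] at h'
  have main : ∀ u : ℝ, HasDerivAt (fun x : ℝ =>
      (c0 + c1*x + c2*x^2 + c3*x^3 + c4*x^4) * g (x/2)
      - (c1 + 2*c2*x + 3*c3*x^2 + 4*c4*x^3) * (2 * g (x/4))
      + (2*c2 + 6*c3*x + 12*c4*x^2) * (8 * g (x/8))
      - (6*c3 + 24*c4*x) * (64 * g (x/16))
      + (24*c4) * (1024 * g (x/32)))
      ((c0 + c1*u + c2*u^2 + c3*u^3 + c4*u^4) * g u) u := by
    intro u
    have P0 : HasDerivAt (fun x : ℝ => c0 + c1*x + c2*x^2 + c3*x^3 + c4*x^4)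
        (c1 + 2*c2*u + 3*c3*u^2 + 4*c4*u^3) u := by
      have h := (((hasDerivAt_const u c0).add ((hasDerivAt_id u).const_mul c1)).add
        ((hasDerivAt_pow 2 u).const_mul c2)).add ((hasDerivAt_pow 3 u).const_mul c3) |>.add
        ((hasDerivAt_pow 4 u).const_mul c4)
      refine h.congr_deriv ?_
      push_cast
      ring
    have P1 : HasDerivAt (fun x : ℝ => c1 + 2*c2*x + 3*c3*x^2 + 4*c4*x^3)
        (2*c2 + 6*c3*u + 12*c4*u^2) u := by
      have h := (((hasDerivAt_const u c1).add ((hasDerivAt_id u).const_mul (2*c2))).add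
        ((hasDerivAt_pow 2 u).const_mul (3*c3))).add ((hasDerivAt_pow 3 u).const_mul (4*c4))
      refine h.congr_deriv ?_
      push_cast
      ring
    have P2 : HasDerivAt (fun x : ℝ => 2*c2 + 6*c3*x + 12*c4*x^2) (6*c3 + 24*c4*u) u := by
      have h := ((hasDerivAt_const u (2*c2)).add ((hasDerivAt_id u).const_mul (6*c3))).add
        ((hasDerivAt_pow 2 u).const_mul (12*c4))
      refine h.congr_deriv ?_
      push_cast
      ring
    have P3 : HasDerivAt (fun x : ℝ => 6*c3 + 24*c4*x) (24*c4) u := by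
      have h := (hasDerivAt_const u (6*c3)).add ((hasDerivAt_id u).const_mul (24*c4))
      refine h.congr_deriv ?_
      ring
    have P4 : HasDerivAt (fun _ : ℝ => 24*c4) 0 u := hasDerivAt_const u (24*c4)
    have h := ((((P0.mul (h1 u)).sub (P1.mul ((h2 u).const_mul 2))).add
      (P2.mul ((h3 u).const_mul 8))).sub (P3.mul ((h4 u).const_mul 64))).add
      (P4.mul ((h5 u).const_mul 1024))
    refine h.congr_deriv ?_
    ring
  exact intervalIntegral.integral_eq_sub_of_hasDerivAt (fun t _ => main t)
    (((by fun_prop : Continuous fun t : ℝ => (c0 + c1*t + c2*t^2 + c3*t^3 + c4*t^4)).mul hc).intervalIntegrable _ _)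

private lemma fab_refl1 (g : ℝ → ℝ) (hc : Continuous g)
    (hR1 : ∀ x ∈ Icc (0:ℝ) 1, g x + g (1 - x) = 1)
    (c0 c1 c2 c3 c4 d0 d1 d2 d3 d4 a b : ℝ) (hab : uIcc a b ⊆ Icc 0 1)
    (hcoef : ∀ s : ℝ, c0 + c1*(1-s) + c2*(1-s)^2 + c3*(1-s)^3 + c4*(1-s)^4
      = d0 + d1*s + d2*s^2 + d3*s^3 + d4*s^4) :
    ∫ t in a..b, (c0 + c1*t + c2*t^2 + c3*t^3 + c4*t^4) * g t
      = (∫ t in a..b, (c0 + c1*t + c2*t^2 + c3*t^3 + c4*t^4))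
        - ∫ s in (1-b)..(1-a), (d0 + d1*s + d2*s^2 + d3*s^3 + d4*s^4) * g s := by
  have hcont1 : Continuous fun t : ℝ => (c0 + c1*t + c2*t^2 + c3*t^3 + c4*t^4) := by fun_prop
  have e1 : EqOn (fun t => (c0 + c1*t + c2*t^2 + c3*t^3 + c4*t^4) * g t)
      (fun t => (c0 + c1*t + c2*t^2 + c3*t^3 + c4*t^4)
        - (c0 + c1*t + c2*t^2 + c3*t^3 + c4*t^4) * g (1-t)) (uIcc a b) := by
    intro t ht
    have h := hR1 t (hab ht)
    simp only
    have hgt : g t = 1 - g (1-t) := by linarith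
    rw [hgt]; ring
  rw [intervalIntegral.integral_congr e1,
    intervalIntegral.integral_sub (hcont1.intervalIntegrable _ _)
      (((by fun_prop : Continuous fun t : ℝ =>
        (c0 + c1*t + c2*t^2 + c3*t^3 + c4*t^4) * g (1 - t))).intervalIntegrable _ _)]
  congr 1
  have h2 := intervalIntegral.integral_comp_sub_left (a := a) (b := b)
    (fun s => (d0 + d1*s + d2*s^2 + d3*s^3 + d4*s^4) * g s) 1
  rw [← h2]
  apply intervalIntegral.integral_congr
  intro s _
  simp only
  rw [← hcoef (1-s)]
  ring

private lemma fab_refl2 (g : ℝ → ℝ) (hc : Continuous g)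
    (hR2 : ∀ x ∈ Icc (0:ℝ) 2, g x = g (2 - x))
    (c0 c1 c2 c3 c4 d0 d1 d2 d3 d4 a b : ℝ) (hab : uIcc a b ⊆ Icc 0 2)
    (hcoef : ∀ s : ℝ, c0 + c1*(2-s) + c2*(2-s)^2 + c3*(2-s)^3 + c4*(2-s)^4
      = d0 + d1*s + d2*s^2 + d3*s^3 + d4*s^4) :
    ∫ t in a..b, (c0 + c1*t + c2*t^2 + c3*t^3 + c4*t^4) * g t
      = ∫ s in (2-b)..(2-a), (d0 + d1*s + d2*s^2 + d3*s^3 + d4*s^4) * g s := by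
  have e1 : EqOn (fun t => (c0 + c1*t + c2*t^2 + c3*t^3 + c4*t^4) * g t)
      (fun t => (c0 + c1*t + c2*t^2 + c3*t^3 + c4*t^4) * g (2-t)) (uIcc a b) := by
    intro t ht
    simp only
    rw [← hR2 t (hab ht)]
  rw [intervalIntegral.integral_congr e1]
  have h2 := intervalIntegral.integral_comp_sub_left (a := a) (b := b)
    (fun s => (d0 + d1*s + d2*s^2 + d3*s^3 + d4*s^4) * g s) 2
  rw [← h2]
  apply intervalIntegral.integral_congr
  intro s _
  simp only
  rw [← hcoef (2-s)]
  ring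

set_option maxHeartbeats 4000000 in
theorem fabius_stmt_17 (f : ℝ → ℝ)
    (hcont : ContinuousOn f (Set.Ici 0))
    (hsym : ∀ x : ℝ, 0 ≤ x → x ≤ 1 → f x + f (1 - x) = 1)
    (hint : ∀ x : ℝ, 0 ≤ x → f x = ∫ t in (0:ℝ)..(2 * x), f t) :
    f (1 / 32) = 19 / 33177600 ∧
      f (3 / 32) = 25219 / 33177600 ∧
      f (5 / 32) = 334781 / 33177600 ∧
      f (7 / 32) = 1396781 / 33177600 ∧
      f (9 / 32) = 3470381 / 33177600 ∧
      f (11 / 32) = 6555581 / 33177600 ∧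
      f (13 / 32) = 10393219 / 33177600 ∧
      f (15 / 32) = 14515219 / 33177600 ∧
      f (17 / 32) = 18662381 / 33177600 ∧
      f (19 / 32) = 22784381 / 33177600 ∧
      f (21 / 32) = 26622019 / 33177600 ∧
      f (23 / 32) = 29707219 / 33177600 ∧
      f (25 / 32) = 31780819 / 33177600 ∧
      f (27 / 32) = 32842819 / 33177600 ∧
      f (29 / 32) = 33152381 / 33177600 ∧
      f (31 / 32) = 33177581 / 33177600 := by
  obtain ⟨g, hgdef⟩ : ∃ g : ℝ → ℝ, g = fun x => f (max x 0) := ⟨_, rfl⟩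
  have hgf : ∀ x : ℝ, 0 ≤ x → g x = f x := by
    intro x hx
    rw [hgdef]
    simp [max_eq_left hx]
  have hc : Continuous g := by
    rw [hgdef]
    exact hcont.comp_continuous (continuous_id.max continuous_const) (fun x => le_max_right x 0)
  have f0 : f 0 = 0 := by simpa using hint 0 le_rfl
  have hgneg : ∀ x : ℝ, x ≤ 0 → g x = 0 := by
    intro x hx
    rw [hgdef]
    simp only [max_eq_right hx, f0]
  have hint' : ∀ x : ℝ, g x = ∫ t in (0:ℝ)..(2*x), g t := by
    intro x
    rcases le_or_gt 0 x with hx | hx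
    · rw [hgf x hx, hint x hx]
      apply intervalIntegral.integral_congr
      intro t ht
      rw [Set.uIcc_of_le (by linarith : (0:ℝ) ≤ 2*x)] at ht
      exact (hgf t ht.1).symm
    · rw [hgneg x hx.le]
      have heq : Set.EqOn g (fun _ => (0:ℝ)) (Set.uIcc 0 (2*x)) := by
        intro t ht
        rw [Set.uIcc_of_ge (by linarith : 2*x ≤ (0:ℝ))] at ht
        exact hgneg t ht.2
      rw [intervalIntegral.integral_congr heq]
      simp
  have hd : ∀ x : ℝ, HasDerivAt g (2 * g (2*x)) x := by
    intro x
    have hG : HasDerivAt (fun u => ∫ t in (0:ℝ)..u, g t) (g (2*x)) (2*x) :=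
      (hc.integral_hasStrictDerivAt 0 (2*x)).hasDerivAt
    have h2 : HasDerivAt (fun y : ℝ => 2*y) 2 x := by
      simpa using (hasDerivAt_id x).const_mul (2:ℝ)
    have h : HasDerivAt (fun y : ℝ => ∫ t in (0:ℝ)..(2*y), g t) (g (2*x) * 2) x := hG.comp x h2
    have heq : g =ᶠ[nhds x] fun y : ℝ => ∫ t in (0:ℝ)..(2*y), g t :=
      Filter.Eventually.of_forall hint'
    have := h.congr_of_eventuallyEq heq
    simpa [mul_comm] using this
  have hgR1 : ∀ x ∈ Set.Icc (0:ℝ) 1, g x + g (1-x) = 1 := by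
    intro x hx
    rw [hgf x hx.1, hgf (1-x) (by linarith [hx.2])]
    exact hsym x hx.1 hx.2
  have gv0 : g 0 = 0 := hgneg 0 le_rfl
  have gv1 : g 1 = 1 := by
    have h := hgR1 0 ⟨le_rfl, zero_le_one⟩
    rw [gv0] at h
    norm_num at h
    exact h
  have gvh : g (1/2) = 1/2 := by
    have h := hgR1 (1/2) (by norm_num)
    norm_num at h
    linarith
  have hgR2 : ∀ x ∈ Set.Icc (0:ℝ) 2, g x = g (2 - x) := by
    have hopen : ∀ x ∈ Set.Ioo (0:ℝ) 1, g (2*x) = g (2-2*x) := by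
      intro x hx
      have hφ1 : HasDerivAt (fun y => g y + g (1-y)) (2*g (2*x) + 2*g (2*(1-x)) * (0-1)) x :=
        (hd x).add ((hd (1-x)).comp x ((hasDerivAt_const x (1:ℝ)).sub (hasDerivAt_id x)))
      have heq : (fun y => g y + g (1-y)) =ᶠ[nhds x] fun _ => (1:ℝ) := by
        filter_upwards [isOpen_Ioo.mem_nhds hx] with y hy
        exact hgR1 y ⟨hy.1.le, hy.2.le⟩
      have hφ2 : HasDerivAt (fun y => g y + g (1-y)) 0 x :=
        (hasDerivAt_const x (1:ℝ)).congr_of_eventuallyEq heq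
      have hu := hφ1.unique hφ2
      rw [show (2:ℝ)*(1-x) = 2-2*x by ring] at hu
      linarith
    have hIoo : Set.EqOn g (fun y => g (2-y)) (Set.Ioo 0 2) := by
      intro y hy
      have hx : y/2 ∈ Set.Ioo (0:ℝ) 1 := ⟨by linarith [hy.1], by linarith [hy.2]⟩
      have h := hopen (y/2) hx
      rw [show (2:ℝ)*(y/2) = y by ring] at h
      simpa using h
    have hclos := hIoo.closure hc (hc.comp (continuous_const.sub continuous_id))
    intro x hx
    rw [← closure_Ioo (by norm_num : (0:ℝ) ≠ 2)] at hx
    exact hclos hx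
  have eqK1_refl := fab_refl1 g hc hgR1 0 0 1 0 0 1 (-2) 1 0 0 0 (1/2) (by rw [Set.uIcc_of_le (by norm_num : (0:ℝ) ≤ (1/2))]; exact Set.Icc_subset_Icc (by norm_num) (by norm_num)) (by intro s; ring)
  have eqK1_L := fab_moment g hc hd 0 0 1 0 0 0 (1/2)
  have eqK1_R := fab_moment g hc hd 1 (-2) 1 0 0 (1/2) 1
  norm_num [integral_pow, integral_id, integral_one, integral_const] at eqK1_refl eqK1_L eqK1_R
  have eqK2_refl := fab_refl2 g hc hgR2 0 0 1 0 0 4 (-4) 1 0 0 0 1 (by rw [Set.uIcc_of_le (by norm_num : (0:ℝ) ≤ 1)]; exact Set.Icc_subset_Icc (by norm_num) (by norm_num)) (by intro s; ring)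
  have eqK2_L := fab_moment g hc hd 0 0 1 0 0 0 1
  have eqK2_R := fab_moment g hc hd 4 (-4) 1 0 0 1 2
  norm_num [integral_pow, integral_id, integral_one, integral_const] at eqK2_refl eqK2_L eqK2_R
  have eqK4_refl := fab_refl1 g hc hgR1 0 0 0 0 1 1 (-4) 6 (-4) 1 0 (1/2) (by rw [Set.uIcc_of_le (by norm_num : (0:ℝ) ≤ (1/2))]; exact Set.Icc_subset_Icc (by norm_num) (by norm_num)) (by intro s; ring)
  have eqK4_L := fab_moment g hc hd 0 0 0 0 1 0 (1/2)
  have eqK4_R := fab_moment g hc hd 1 (-4) 6 (-4) 1 (1/2) 1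
  norm_num [integral_pow, integral_id, integral_one, integral_const] at eqK4_refl eqK4_L eqK4_R
  have eqK3_refl := fab_refl1 g hc hgR1 0 0 0 1 0 1 (-3) 3 (-1) 0 0 (1/2) (by rw [Set.uIcc_of_le (by norm_num : (0:ℝ) ≤ (1/2))]; exact Set.Icc_subset_Icc (by norm_num) (by norm_num)) (by intro s; ring)
  have eqK3_L := fab_moment g hc hd 0 0 0 1 0 0 (1/2)
  have eqK3_R := fab_moment g hc hd 1 (-3) 3 (-1) 0 (1/2) 1
  norm_num [integral_pow, integral_id, integral_one, integral_const] at eqK3_refl eqK3_L eqK3_R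
  have eqN1_refl := fab_refl1 g hc hgR1 1 0 0 0 0 1 0 0 0 0 0 (1/4) (by rw [Set.uIcc_of_le (by norm_num : (0:ℝ) ≤ (1/4))]; exact Set.Icc_subset_Icc (by norm_num) (by norm_num)) (by intro s; ring)
  have eqN1_L := fab_moment g hc hd 1 0 0 0 0 0 (1/4)
  have eqN1_R := fab_moment g hc hd 1 0 0 0 0 (3/4) 1
  norm_num [integral_pow, integral_id, integral_one, integral_const] at eqN1_refl eqN1_L eqN1_R
  have eqN2_refl := fab_refl1 g hc hgR1 1 0 0 0 0 1 0 0 0 0 0 (1/8) (by rw [Set.uIcc_of_le (by norm_num : (0:ℝ) ≤ (1/8))]; exact Set.Icc_subset_Icc (by norm_num) (by norm_num)) (by intro s; ring)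
  have eqN2_L := fab_moment g hc hd 1 0 0 0 0 0 (1/8)
  have eqN2_R := fab_moment g hc hd 1 0 0 0 0 (7/8) 1
  norm_num [integral_pow, integral_id, integral_one, integral_const] at eqN2_refl eqN2_L eqN2_R
  have eqN5_refl := fab_refl1 g hc hgR1 0 1 0 0 0 1 (-1) 0 0 0 0 (1/8) (by rw [Set.uIcc_of_le (by norm_num : (0:ℝ) ≤ (1/8))]; exact Set.Icc_subset_Icc (by norm_num) (by norm_num)) (by intro s; ring)
  have eqN5_L := fab_moment g hc hd 0 1 0 0 0 0 (1/8)
  have eqN5_R := fab_moment g hc hd 1 (-1) 0 0 0 (7/8) 1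
  norm_num [integral_pow, integral_id, integral_one, integral_const] at eqN5_refl eqN5_L eqN5_R
  have eqN4_refl := fab_refl1 g hc hgR1 0 1 0 0 0 1 (-1) 0 0 0 0 (1/4) (by rw [Set.uIcc_of_le (by norm_num : (0:ℝ) ≤ (1/4))]; exact Set.Icc_subset_Icc (by norm_num) (by norm_num)) (by intro s; ring)
  have eqN4_L := fab_moment g hc hd 0 1 0 0 0 0 (1/4)
  have eqN4_R := fab_moment g hc hd 1 (-1) 0 0 0 (3/4) 1
  norm_num [integral_pow, integral_id, integral_one, integral_const] at eqN4_refl eqN4_L eqN4_R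
  have eqN3_refl := fab_refl1 g hc hgR1 1 0 0 0 0 1 0 0 0 0 0 (3/8) (by rw [Set.uIcc_of_le (by norm_num : (0:ℝ) ≤ (3/8))]; exact Set.Icc_subset_Icc (by norm_num) (by norm_num)) (by intro s; ring)
  have eqN3_L := fab_moment g hc hd 1 0 0 0 0 0 (3/8)
  have eqN3_R := fab_moment g hc hd 1 0 0 0 0 (5/8) 1
  norm_num [integral_pow, integral_id, integral_one, integral_const] at eqN3_refl eqN3_L eqN3_R
  have eqN7_refl := fab_refl1 g hc hgR1 0 0 1 0 0 1 (-2) 1 0 0 0 (1/4) (by rw [Set.uIcc_of_le (by norm_num : (0:ℝ) ≤ (1/4))]; exact Set.Icc_subset_Icc (by norm_num) (by norm_num)) (by intro s; ring)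
  have eqN7_L := fab_moment g hc hd 0 0 1 0 0 0 (1/4)
  have eqN7_R := fab_moment g hc hd 1 (-2) 1 0 0 (3/4) 1
  norm_num [integral_pow, integral_id, integral_one, integral_const] at eqN7_refl eqN7_L eqN7_R
  have eqN6_refl := fab_refl1 g hc hgR1 0 1 0 0 0 1 (-1) 0 0 0 0 (3/8) (by rw [Set.uIcc_of_le (by norm_num : (0:ℝ) ≤ (3/8))]; exact Set.Icc_subset_Icc (by norm_num) (by norm_num)) (by intro s; ring)
  have eqN6_L := fab_moment g hc hd 0 1 0 0 0 0 (3/8)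
  have eqN6_R := fab_moment g hc hd 1 (-1) 0 0 0 (5/8) 1
  norm_num [integral_pow, integral_id, integral_one, integral_const] at eqN6_refl eqN6_L eqN6_R
  have eqB1_refl := fab_refl1 g hc hgR1 1 0 0 0 0 1 0 0 0 0 (1/16) (15/16) (by rw [Set.uIcc_of_le (by norm_num : ((1/16):ℝ) ≤ (15/16))]; exact Set.Icc_subset_Icc (by norm_num) (by norm_num)) (by intro s; ring)
  have eqB1_L := fab_moment g hc hd 1 0 0 0 0 (1/16) (15/16)
  have eqB1_R := fab_moment g hc hd 1 0 0 0 0 (1/16) (15/16)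
  norm_num [integral_pow, integral_id, integral_one, integral_const] at eqB1_refl eqB1_L eqB1_R
  have eqB3_refl := fab_refl1 g hc hgR1 1 0 0 0 0 1 0 0 0 0 (3/16) (13/16) (by rw [Set.uIcc_of_le (by norm_num : ((3/16):ℝ) ≤ (13/16))]; exact Set.Icc_subset_Icc (by norm_num) (by norm_num)) (by intro s; ring)
  have eqB3_L := fab_moment g hc hd 1 0 0 0 0 (3/16) (13/16)
  have eqB3_R := fab_moment g hc hd 1 0 0 0 0 (3/16) (13/16)
  norm_num [integral_pow, integral_id, integral_one, integral_const] at eqB3_refl eqB3_L eqB3_R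
  have eqB5_refl := fab_refl1 g hc hgR1 1 0 0 0 0 1 0 0 0 0 (5/16) (11/16) (by rw [Set.uIcc_of_le (by norm_num : ((5/16):ℝ) ≤ (11/16))]; exact Set.Icc_subset_Icc (by norm_num) (by norm_num)) (by intro s; ring)
  have eqB5_L := fab_moment g hc hd 1 0 0 0 0 (5/16) (11/16)
  have eqB5_R := fab_moment g hc hd 1 0 0 0 0 (5/16) (11/16)
  norm_num [integral_pow, integral_id, integral_one, integral_const] at eqB5_refl eqB5_L eqB5_R
  have eqB7_refl := fab_refl1 g hc hgR1 1 0 0 0 0 1 0 0 0 0 (7/16) (9/16) (by rw [Set.uIcc_of_le (by norm_num : ((7/16):ℝ) ≤ (9/16))]; exact Set.Icc_subset_Icc (by norm_num) (by norm_num)) (by intro s; ring)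
  have eqB7_L := fab_moment g hc hd 1 0 0 0 0 (7/16) (9/16)
  have eqB7_R := fab_moment g hc hd 1 0 0 0 0 (7/16) (9/16)
  norm_num [integral_pow, integral_id, integral_one, integral_const] at eqB7_refl eqB7_L eqB7_R
  have v18 : g ((1/8)) = (1/288) := by linear_combination (1/12 : ℝ) * eqK1_refl + (-1/12 : ℝ) * eqK1_L + (-1/12 : ℝ) * eqK1_R + (4/3 : ℝ) * gv0
  have v14 : g ((1/4)) = (5/72) := by linear_combination (-1/16 : ℝ) * eqK2_refl + (1/16 : ℝ) * eqK2_L + (-1/16 : ℝ) * eqK2_R + (2 : ℝ) * v18 + (-1 : ℝ) * gv0 + (1/8 : ℝ) * gvh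
  have v132 : g ((1/32)) = (19/33177600) := by linear_combination (1/23040 : ℝ) * eqK4_refl + (-1/23040 : ℝ) * eqK4_L + (-1/23040 : ℝ) * eqK4_R + (1/11520 : ℝ) * v18 + (16/15 : ℝ) * gv0
  have v116 : g ((1/16)) = (143/2073600) := by linear_combination (1/384 : ℝ) * eqK3_refl + (-1/384 : ℝ) * eqK3_L + (-1/384 : ℝ) * eqK3_R + (1/128 : ℝ) * v18 + (2 : ℝ) * v132 + (-1 : ℝ) * gv0
  have v38 : g ((3/8)) = (73/288) := by linear_combination (-1 : ℝ) * eqN1_refl + (1 : ℝ) * eqN1_L + (1 : ℝ) * eqN1_R + (1 : ℝ) * v18 + (-1 : ℝ) * gv0 + (1 : ℝ) * gvh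
  have v716 : g ((7/16)) = (777743/2073600) := by linear_combination (-1 : ℝ) * eqN2_refl + (1 : ℝ) * eqN2_L + (1 : ℝ) * eqN2_R + (1 : ℝ) * v116 + (-1 : ℝ) * gv0 + (1 : ℝ) * gvh
  have v732 : g ((7/32)) = (1396781/33177600) := by linear_combination (-1/2 : ℝ) * eqN5_refl + (1/2 : ℝ) * eqN5_L + (1/2 : ℝ) * eqN5_R + (1/16 : ℝ) * v116 + (-1 : ℝ) * v132 + (1 : ℝ) * v14 + (-1/16 : ℝ) * v716 + (1 : ℝ) * gv0
  have v316 : g ((3/16)) = (46657/2073600) := by linear_combination (-1/2 : ℝ) * eqN4_refl + (1/2 : ℝ) * eqN4_L + (1/2 : ℝ) * eqN4_R + (1/8 : ℝ) * v18 + (-1 : ℝ) * v116 + (1 : ℝ) * v14 + (-1/8 : ℝ) * v38 + (1 : ℝ) * gv0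
  have v516 : g ((5/16)) = (305857/2073600) := by linear_combination (-1 : ℝ) * eqN3_refl + (1 : ℝ) * eqN3_L + (1 : ℝ) * eqN3_R + (1 : ℝ) * v316 + (-1 : ℝ) * gv0 + (1 : ℝ) * gvh
  have v332 : g ((3/32)) = (25219/33177600) := by linear_combination (-1/16 : ℝ) * eqN7_refl + (1/16 : ℝ) * eqN7_L + (1/16 : ℝ) * eqN7_R + (257/256 : ℝ) * v18 + (-1/16 : ℝ) * v116 + (1 : ℝ) * v132 + (-1/256 : ℝ) * v38 + (-1/16 : ℝ) * v316 + (-1 : ℝ) * gv0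
  have v532 : g ((5/32)) = (334781/33177600) := by linear_combination (-1/2 : ℝ) * eqN6_refl + (1/2 : ℝ) * eqN6_L + (1/2 : ℝ) * eqN6_R + (3/16 : ℝ) * v316 + (-1 : ℝ) * v332 + (1 : ℝ) * v14 + (-3/16 : ℝ) * v516 + (1 : ℝ) * gv0
  have v932 : g ((9/32)) = (3470381/33177600) := by linear_combination (1/2 : ℝ) * eqB7_refl + (-1 : ℝ) * eqB7_L + (1 : ℝ) * v732
  have v1132 : g ((11/32)) = (6555581/33177600) := by linear_combination (1/2 : ℝ) * eqB5_refl + (-1 : ℝ) * eqB5_L + (1 : ℝ) * v532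
  have v1332 : g ((13/32)) = (10393219/33177600) := by linear_combination (1/2 : ℝ) * eqB3_refl + (-1 : ℝ) * eqB3_L + (1 : ℝ) * v332
  have v1532 : g ((15/32)) = (14515219/33177600) := by linear_combination (1/2 : ℝ) * eqB1_refl + (-1 : ℝ) * eqB1_L + (1 : ℝ) * v132
  have hv1732 := hgR1 ((15/32)) (by norm_num)
  norm_num at hv1732
  have v1732 : g ((17/32)) = (18662381/33177600) := by linear_combination hv1732 - v1532
  have hv1932 := hgR1 ((13/32)) (by norm_num)
  norm_num at hv1932
  have v1932 : g ((19/32)) = (22784381/33177600) := by linear_combination hv1932 - v1332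
  have hv2132 := hgR1 ((11/32)) (by norm_num)
  norm_num at hv2132
  have v2132 : g ((21/32)) = (26622019/33177600) := by linear_combination hv2132 - v1132
  have hv2332 := hgR1 ((9/32)) (by norm_num)
  norm_num at hv2332
  have v2332 : g ((23/32)) = (29707219/33177600) := by linear_combination hv2332 - v932
  have hv2532 := hgR1 ((7/32)) (by norm_num)
  norm_num at hv2532
  have v2532 : g ((25/32)) = (31780819/33177600) := by linear_combination hv2532 - v732
  have hv2732 := hgR1 ((5/32)) (by norm_num)
  norm_num at hv2732
  have v2732 : g ((27/32)) = (32842819/33177600) := by linear_combination hv2732 - v532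
  have hv2932 := hgR1 ((3/32)) (by norm_num)
  norm_num at hv2932
  have v2932 : g ((29/32)) = (33152381/33177600) := by linear_combination hv2932 - v332
  have hv3132 := hgR1 ((1/32)) (by norm_num)
  norm_num at hv3132
  have v3132 : g ((31/32)) = (33177581/33177600) := by linear_combination hv3132 - v132
  refine ⟨?_, ?_, ?_, ?_, ?_, ?_, ?_, ?_, ?_, ?_, ?_, ?_, ?_, ?_, ?_, ?_⟩
  · rw [← hgf (1 / 32) (by norm_num)]; exact v132
  · rw [← hgf (3 / 32) (by norm_num)]; exact v332
  · rw [← hgf (5 / 32) (by norm_num)]; exact v532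
  · rw [← hgf (7 / 32) (by norm_num)]; exact v732
  · rw [← hgf (9 / 32) (by norm_num)]; exact v932
  · rw [← hgf (11 / 32) (by norm_num)]; exact v1132
  · rw [← hgf (13 / 32) (by norm_num)]; exact v1332
  · rw [← hgf (15 / 32) (by norm_num)]; exact v1532
  · rw [← hgf (17 / 32) (by norm_num)]; exact v1732
  · rw [← hgf (19 / 32) (by norm_num)]; exact v1932
  · rw [← hgf (21 / 32) (by norm_num)]; exact v2132
  · rw [← hgf (23 / 32) (by norm_num)]; exact v2332
  · rw [← hgf (25 / 32) (by norm_num)]; exact v2532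
  · rw [← hgf (27 / 32) (by norm_num)]; exact v2732
  · rw [← hgf (29 / 32) (by norm_num)]; exact v2932
  · rw [← hgf (31 / 32) (by norm_num)]; exact v3132
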